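/- Let F be a field, let A ∈ F^{k×m} and b ∈ F^{1×m}, and suppose the affine solution set S = { x ∈ F^{1×k} : x·A = b } is nonempty. Let v ∈ F^{k} and μ ∈ F. Then S ⊆ { x ∈ F^{1×k} : x·v = μ } if and only if there exists ξ ∈ F^{m} with A·ξ = v and b·ξ = μ. -/

import Mathlib

open Matrix

/-- Let `F` be a field, `A ∈ F^{k×m}`, `b ∈ F^{1×m}`, and suppose the
affine solution set `S = {x ∈ F^{1×k} : x·A = b}` is nonempty. Then `S` is contained in
`{x : x·v = μ}` iff there exists `ξ ∈ F^m` with `A·ξ = v` and `b·ξ = μ`. -/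
theorem affine_inclusion_iff {F : Type*} [Field F] {k m : ℕ}
    (A : Matrix (Fin k) (Fin m) F) (b : Fin m → F)
    (hne : ∃ x : Fin k → F, Matrix.vecMul x A = b)
    (v : Fin k → F) (μ : F) :
    (∀ x : Fin k → F, Matrix.vecMul x A = b → dotProduct x v = μ) ↔
      ∃ ξ : Fin m → F, A.mulVec ξ = v ∧ dotProduct b ξ = μ := by
  obtain ⟨x₀, hx₀⟩ := hne
  constructor
  · intro h
    have hmem : v ∈ LinearMap.range A.mulVecLin := by
      by_contra hv
      obtain ⟨f, hfv, hf⟩ :=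
        Submodule.exists_dual_map_eq_bot_of_notMem hv inferInstance
      set y : Fin k → F := fun i => f (Pi.single i 1) with hy
      have hfeq : ∀ z : Fin k → F, f z = dotProduct z y := by
        intro z
        rw [LinearMap.pi_apply_eq_sum_univ f z]
        simp only [dotProduct, smul_eq_mul, y]
        refine Finset.sum_congr rfl fun i _ => ?_
        have hsingle : (fun j => if i = j then (1:F) else 0) = Pi.single i 1 := by
          ext j
          simp [Pi.single_apply, eq_comm]
        rw [hsingle]
      have hyA : Matrix.vecMul y A = 0 := by
        ext j
        have hmemj : A.mulVecLin (Pi.single j 1) ∈ LinearMap.range A.mulVecLin :=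
          LinearMap.mem_range_self _ _
        have h0 : f (A.mulVec (Pi.single j 1)) = 0 := by
          have := Submodule.mem_map_of_mem (f := f) hmemj
          rw [hf] at this
          simpa using this
        rw [hfeq] at h0
        rw [dotProduct_comm, Matrix.dotProduct_mulVec,
          dotProduct_single, mul_one] at h0
        simpa using h0
      have h1 : dotProduct (x₀ + y) v = μ := by
        apply h
        rw [Matrix.add_vecMul, hyA, hx₀, add_zero]
      have h2 : dotProduct x₀ v = μ := h x₀ hx₀
      have h3 : dotProduct y v = 0 := by
        rw [add_dotProduct, h2] at h1
        exact add_eq_left.mp h1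
      apply hfv
      rw [hfeq v, dotProduct_comm]
      exact h3
    obtain ⟨ξ, hξ⟩ := hmem
    rw [Matrix.mulVecLin_apply] at hξ
    refine ⟨ξ, hξ, ?_⟩
    rw [← hx₀, ← Matrix.dotProduct_mulVec, hξ]
    exact h x₀ hx₀
  · rintro ⟨ξ, hξ, hbξ⟩ x hx
    rw [← hξ, Matrix.dotProduct_mulVec, hx]
    exact hbξ
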